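/- Every strong k-jagged partition is equal to the juxtaposition (concatenation, in increasing order of the index j) of its maximal blocks M_j over all positive integers j. -/

import Mathlib

set_option maxHeartbeats 2000000


/-- A strong `k`-jagged partition: a nonempty integer list whose first element is positive
and such that `a i' - a i ≥ -k` for all pairs of indices `i < i'`. -/
def IsStrongJagged (k : ℕ) (l : List ℤ) : Prop :=
  l ≠ [] ∧ 0 < l.headI ∧
  ∀ i i' : Fin l.length, i < i' → l.get i' - l.get i ≥ -(k : ℤ)

/-- `b` is the maximal block `M_j` of the strong `k`-jagged partition `l`: if there is an
element of `l` equal to `j` preceded only by elements smaller than `j`, then `b` is the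
maximal contiguous subsequence of `l` starting there all of whose elements lie in
`{j, j-1, …, j-k}`; otherwise `b` is empty. -/
def IsMaxBlock (k : ℕ) (l : List ℤ) (j : ℤ) (b : List ℤ) : Prop :=
  (b = [] ∧ ¬ ∃ i : Fin l.length, l.get i = j ∧
      ∀ i' : Fin l.length, i' < i → l.get i' < j) ∨
  (∃ i : Fin l.length, l.get i = j ∧
      (∀ i' : Fin l.length, i' < i → l.get i' < j) ∧
      b = (l.drop i).takeWhile (fun x => decide (j - (k : ℤ) ≤ x ∧ x ≤ j)))

lemma flatten_shift (g : ℕ → List ℤ) (s N : ℕ) (hs : s ≤ N)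
    (h0 : ∀ t < s, g t = []) :
    ((List.range N).map g).flatten
      = ((List.range (N - s)).map (fun u => g (s + u))).flatten := by
  conv_lhs => rw [show N = s + (N - s) by omega]
  rw [List.range_add, List.map_append, List.flatten_append, List.map_map]
  have h1 : ((List.range s).map g).flatten = [] := by
    rw [List.flatten_eq_nil_iff]
    intro x hx
    simp only [List.mem_map, List.mem_range] at hx
    obtain ⟨t, ht, rfl⟩ := hx
    exact h0 t ht
  rw [h1, List.nil_append]
  rfl

lemma mainAux (k : ℕ) : ∀ (n : ℕ) (l : List ℤ), l.length ≤ n → IsStrongJagged k l →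
    ∃ (N : ℕ) (B : ℕ → List ℤ),
      (∀ j : ℕ, 0 < j → IsMaxBlock k l (j : ℤ) (B j)) ∧
      (∀ j : ℕ, N < j → B j = []) ∧
      ((List.range N).map (fun j => B (j + 1))).flatten = l := by
  intro n
  induction n with
  | zero =>
    intro l hlen hl
    exact absurd (List.length_eq_zero_iff.mp (Nat.le_zero.mp hlen)) hl.1
  | succ n IH =>
    intro l hlen hl
    obtain ⟨hne, hpos, hstr⟩ := hl
    obtain ⟨a, t, rfl⟩ := List.exists_cons_of_ne_nil hne
    have hpos : 0 < a := hpos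
    have hlpos : 0 < (a :: t).length := by simp
    set P : ℤ → Bool := fun x => decide (a - (k : ℤ) ≤ x ∧ x ≤ a) with hP
    have hPa : P a = true := by simp only [hP, decide_eq_true_eq]; omega
    set b : List ℤ := (a :: t).takeWhile P with hbdef
    set r : List ℤ := (a :: t).dropWhile P with hrdef
    have hbr : b ++ r = a :: t := List.takeWhile_append_dropWhile (p := P) (l := a :: t)
    have hble : b.length ≤ (a :: t).length := (List.takeWhile_prefix P).length_le
    have hbcons : b = a :: t.takeWhile P := by
      rw [hbdef, List.takeWhile_cons, if_pos hPa]
    have hbpos : 0 < b.length := by rw [hbcons]; simp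
    have hrdrop : r = (a :: t).drop b.length := by
      conv_rhs => rw [← hbr]
      rw [List.drop_left]
    have hlength : b.length + r.length = (a :: t).length := by
      rw [← hbr]; simp
    have hget0 : (a :: t).get ⟨0, hlpos⟩ = a := rfl
    -- elements of the prefix b are ≤ a
    clear_value P b r
    have hbpre : b <+: (a :: t) := by rw [hbdef]; exact List.takeWhile_prefix P
    have hprefix_le : ∀ (m : ℕ) (hm : m < (a :: t).length), m < b.length → (a :: t)[m] ≤ a := by
      intro m hm hmb
      have h1 : b[m]'hmb = (a :: t)[m] := hbpre.getElem hmb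
      have h2 : P (b[m]'hmb) = true :=
        List.mem_takeWhile_imp (by rw [← hbdef]; exact List.getElem_mem hmb)
      rw [h1] at h2
      simp only [hP, decide_eq_true_eq] at h2
      exact h2.2
    by_cases hr : r = []
    · -- base case : the whole list is one block
      have hbl : b = a :: t := by rw [← hbr, hr, List.append_nil]
      refine ⟨a.toNat, fun m => if (m : ℤ) = a then a :: t else [], ?_, ?_, ?_⟩
      · intro m hm
        by_cases hma : (m : ℤ) = a
        · right
          refine ⟨⟨0, hlpos⟩, by rw [hget0, hma], ?_, ?_⟩
          · intro i' hi'
            exact absurd hi' (by simp [Fin.lt_def])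
          · show (if (m : ℤ) = a then a :: t else []) = _
            rw [if_pos hma, hma, ← hP]
            show a :: t = List.takeWhile P ((a :: t).drop 0)
            rw [List.drop_zero]
            conv_lhs => rw [← hbl]
            exact hbdef
        · left
          refine ⟨(if_neg hma : (if (m : ℤ) = a then a :: t else []) = []), ?_⟩
          rintro ⟨i, hiv, hlt⟩
          have hia : (a :: t)[i.val] ≤ a := hprefix_le i.val i.isLt (by rw [hbl]; exact i.isLt)
          rw [List.get_eq_getElem] at hiv
          rcases Nat.eq_zero_or_pos i.val with h0 | h0
          · apply hma
            rw [← hiv]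
            have : (a :: t)[i.val] = (a :: t)[0] := by congr 1
            rw [this]; rfl
          · have := hlt ⟨0, hlpos⟩ (by rw [Fin.lt_def]; exact h0)
            rw [hget0] at this
            omega
      · intro m hm
        show (if (m : ℤ) = a then a :: t else []) = []
        apply if_neg
        omega
      · rw [flatten_shift _ (a.toNat - 1) a.toNat (by omega) ?side]
        case side =>
          intro u hu
          apply if_neg
          omega
        rw [show a.toNat - (a.toNat - 1) = 1 by omega]
        simp only [List.range_succ, List.range_zero, List.nil_append, List.map_cons,
          List.map_nil, List.flatten_cons, List.flatten_nil, List.append_nil]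
        rw [if_pos (show ((a.toNat - 1 + 0 + 1 : ℕ) : ℤ) = a by omega)]
    · -- recursive case
      obtain ⟨c, rt, hcrt⟩ := List.exists_cons_of_ne_nil hr
      have hrpos : 0 < r.length := by rw [hcrt]; simp
      have hblt : b.length < (a :: t).length := by omega
      have hrlen : r.length = (a :: t).length - b.length := by omega
      have hdrop2 : ∀ iv : ℕ, r.drop iv = (a :: t).drop (b.length + iv) := by
        intro iv; rw [hrdrop, List.drop_drop]
      have hcget : r.get ⟨0, hrpos⟩ = (a :: t).get ⟨b.length, hblt⟩ := by
        simp only [List.get_eq_getElem, hrdrop, List.getElem_drop, Nat.add_zero]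
      have hc0 : r.get ⟨0, hrpos⟩ = c := by
        simp only [List.get_eq_getElem, hcrt, List.getElem_cons_zero]
      have hdw : List.dropWhile P (a :: t) = c :: rt := by rw [← hrdef]; exact hcrt
      have hPc : P c = false := by
        have h1 := List.head_dropWhile_not P (l := a :: t) (by rw [hdw]; simp)
        simpa only [hdw, List.head_cons] using h1
      have hcval : (a :: t).get ⟨b.length, hblt⟩ = c := by rw [← hcget]; exact hc0
      have hac : a < c := by
        have hs := hstr ⟨0, hlpos⟩ ⟨b.length, hblt⟩ (Fin.mk_lt_mk.mpr hbpos)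
        rw [hget0, hcval] at hs
        simp only [hP, decide_eq_false_iff_not] at hPc
        push_neg at hPc
        have := hPc (by omega)
        omega
      -- r is a strong jagged partition
      have hgetr : ∀ (i : Fin r.length), r.get i = (a :: t).get ⟨b.length + i.val, by omega⟩ := by
        intro i
        simp only [List.get_eq_getElem, hrdrop, List.getElem_drop]
      have hstrr : IsStrongJagged k r := by
        refine ⟨hr, ?_, ?_⟩
        · rw [hcrt]; show 0 < c; omega
        · intro i i' hii
          rw [hgetr i, hgetr i']
          exact hstr _ _ (by simp only [Fin.lt_def] at hii ⊢; omega)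
      obtain ⟨Nr, Br, hBr1, hBr2, hBr3⟩ := IH r (by omega) hstrr
      -- every record of r has value ≥ c
      have hrecr : ∀ (i : Fin r.length), (∀ i' : Fin r.length, i' < i → r.get i' < r.get i) →
          c ≤ r.get i := by
        intro i hi
        rcases Nat.eq_zero_or_pos i.val with h0 | h0
        · have : i = ⟨0, by rw [hcrt]; simp⟩ := by ext; exact h0
          rw [this, hc0]
        · have := hi ⟨0, by rw [hcrt]; simp⟩ (by simpa [Fin.lt_def] using h0)
          rw [hc0] at this
          omega
      have hBrsmall : ∀ m : ℕ, 0 < m → (m : ℤ) ≤ a → Br m = [] := by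
        intro m hm hma
        rcases hBr1 m hm with ⟨h1, _⟩ | ⟨i, hiv, hlt, _⟩
        · exact h1
        · have := hrecr i (by intro i' hi'; rw [hiv]; exact hlt i' hi')
          rw [hiv] at this
          omega
      have hNrge : a.toNat < Nr := by
        by_contra hcon
        push_neg at hcon
        have hcN : Nr < c.toNat := by omega
        have h0 : Br c.toNat = [] := hBr2 _ hcN
        have hcc : ((c.toNat : ℕ) : ℤ) = c := by omega
        rcases hBr1 c.toNat (by omega) with ⟨_, h2⟩ | ⟨i, hiv, hlt, hblk⟩
        · apply h2
          refine ⟨⟨0, hrpos⟩, by rw [hc0, hcc], ?_⟩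
          intro i' hi'
          exact absurd hi' (by simp [Fin.lt_def])
        · rw [h0] at hblk
          have hdrop : r.drop i.val = r.get i :: r.drop (i.val + 1) := by
            rw [List.get_eq_getElem]
            exact List.drop_eq_getElem_cons i.isLt
          rw [hdrop, hiv, List.takeWhile_cons, hcc] at hblk
          rw [if_pos (by simp only [decide_eq_true_eq]; omega)] at hblk
          exact List.cons_ne_nil _ _ hblk.symm
      refine ⟨Nr, fun m => if (m : ℤ) = a then b else Br m, ?_, ?_, ?_⟩
      · intro m hm
        by_cases hma : (m : ℤ) = a
        · right
          refine ⟨⟨0, hlpos⟩, by rw [hget0, hma], ?_, ?_⟩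
          · intro i' hi'
            exact absurd hi' (by simp [Fin.lt_def])
          · show (if (m : ℤ) = a then b else Br m) = _
            rw [if_pos hma, hma, ← hP]
            show b = List.takeWhile P ((a :: t).drop 0)
            rw [List.drop_zero]
            exact hbdef
        · show IsMaxBlock k (a :: t) (m : ℤ) (if (m : ℤ) = a then b else Br m)
          rw [if_neg hma]
          rcases hBr1 m hm with ⟨h1, h2⟩ | ⟨i, hiv, hlt, hblk⟩
          · left
            refine ⟨h1, ?_⟩
            rintro ⟨i, hiv, hlt⟩
            rw [List.get_eq_getElem] at hiv
            -- i.val ≠ 0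
            have hi0 : 0 < i.val := by
              rcases Nat.eq_zero_or_pos i.val with h0 | h0
              · exfalso; apply hma; rw [← hiv]
                have : (a :: t)[i.val] = (a :: t)[0] := by congr 1
                rw [this]; rfl
              · exact h0
            have ham : a < (m : ℤ) := by
              have := hlt ⟨0, hlpos⟩ (by rw [Fin.lt_def]; exact hi0)
              rwa [hget0] at this
            have hib : b.length ≤ i.val := by
              by_contra hcon
              push_neg at hcon
              have := hprefix_le i.val i.isLt hcon
              omega
            apply h2
            refine ⟨⟨i.val - b.length, by omega⟩, ?_, ?_⟩
            · rw [hgetr ⟨i.val - b.length, by omega⟩]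
              simp only [List.get_eq_getElem]
              rw [← hiv]
              congr 1
              omega
            · intro i' hi'
              simp only [Fin.lt_def] at hi'
              rw [hgetr i']
              have := hlt ⟨b.length + i'.val, by omega⟩ (by simp only [Fin.lt_def]; omega)
              exact this
          · right
            have hcm : c ≤ (m : ℤ) := by
              have := hrecr i (by intro i' hi'; rw [hiv]; exact hlt i' hi')
              rwa [hiv] at this
            refine ⟨⟨b.length + i.val, by omega⟩, ?_, ?_, ?_⟩
            · rw [← hgetr i]; exact hiv
            · intro i' hi'
              simp only [Fin.lt_def] at hi'
              by_cases hib : i'.val < b.length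
              · have := hprefix_le i'.val i'.isLt hib
                rw [List.get_eq_getElem]
                omega
              · have hi'' := hlt ⟨i'.val - b.length, by omega⟩ (by simp only [Fin.lt_def]; omega)
                rw [hgetr ⟨i'.val - b.length, by omega⟩] at hi''
                simp only [List.get_eq_getElem] at hi'' ⊢
                convert hi'' using 3
                omega
            · rw [hblk, hdrop2 i.val]
      · intro m hm
        show (if (m : ℤ) = a then b else Br m) = []
        rw [if_neg (by omega)]
        exact hBr2 m hm
      · have hr2 : (List.map (fun u => Br (a.toNat + u + 1)) (List.range (Nr - a.toNat))).flatten
            = r := by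
          conv_rhs => rw [← hBr3]
          rw [flatten_shift (fun j => Br (j + 1)) a.toNat Nr (le_of_lt hNrge)
            (fun u hu => hBrsmall (u + 1) (by omega) (by omega))]
        rw [flatten_shift (fun j => if ((j + 1 : ℕ) : ℤ) = a then b else Br (j + 1))
            (a.toNat - 1) Nr (by omega)
            (fun u hu => by
              show (if ((u + 1 : ℕ) : ℤ) = a then b else Br (u + 1)) = []
              rw [if_neg (by omega)]
              exact hBrsmall (u + 1) (by omega) (by omega))]
        rw [show Nr - (a.toNat - 1) = (Nr - a.toNat) + 1 by omega, List.range_succ_eq_map]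
        simp only [List.map_cons, List.flatten_cons, List.map_map, Function.comp,
          Nat.succ_eq_add_one]
        rw [show a.toNat - 1 + 0 + 1 = a.toNat by omega]
        rw [if_pos (show ((a.toNat : ℕ) : ℤ) = a by omega)]
        rw [← hbr]
        congr 1
        rw [← hr2]
        congr 1
        apply List.map_congr_left
        intro u hu
        simp only [Function.comp_apply, Nat.succ_eq_add_one]
        rw [show a.toNat - 1 + (u + 1) + 1 = a.toNat + u + 1 by omega]
        rw [if_neg (by omega)]

/-- Every strong `k`-jagged partition is the juxtaposition, in increasing order of `j`, of
its maximal blocks `M_j` over all positive integers `j`. -/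
theorem stmt_3 (k : ℕ) (l : List ℤ) (hl : IsStrongJagged k l) :
    ∃ (N : ℕ) (B : ℕ → List ℤ),
      (∀ j : ℕ, 0 < j → IsMaxBlock k l (j : ℤ) (B j)) ∧
      (∀ j : ℕ, N < j → B j = []) ∧
      ((List.range N).map (fun j => B (j + 1))).flatten = l := by
  exact mainAux k l.length l le_rfl hl
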